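/- arXiv:2604.08246 — 4 statements merged into one kernel-verified Lean document; each statement's English description precedes it below -/
import Mathlib

section
/- Let V be a real normed space, E : V → ℝ ∪ {+∞} convex, proper, and lower semicontinuous, and suppose E(v) → ∞ as ‖v‖ → ∞ (coercivity). If V is a reflexive Banach space, then E attains its minimum on V: there exists u ∈ V with E(u) = inf E(V). -/
open scoped RealInnerProductSpace
open MeasureTheory

open NormedSpace in
/-- Weak compactness of closed balls in a reflexive Banach space. -/
lemma aux_weak_ball_compact {V : Type*} [NormedAddCommGroup V] [NormedSpace ℝ V]
    [CompleteSpace V]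
    (hrefl : Function.Surjective (NormedSpace.inclusionInDoubleDual ℝ V)) (R : ℝ) :
    IsCompact (toWeakSpace ℝ V '' Metric.closedBall 0 R) := by
  set J := NormedSpace.inclusionInDoubleDualLi ℝ (E := V) with hJ
  have hJsurj : Function.Surjective J := hrefl
  set e : V ≃ (StrongDual ℝ (StrongDual ℝ V)) := Equiv.ofBijective J ⟨J.injective, hJsurj⟩ with he
  set g : WeakDual ℝ (StrongDual ℝ V) → WeakSpace ℝ V :=
    fun x'' => toWeakSpace ℝ V (e.symm (WeakDual.toStrongDual x'')) with hg
  have hgcont : Continuous g := by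
    apply WeakBilin.continuous_of_continuous_eval
    intro ℓ
    have key : ∀ x'' : WeakDual ℝ (StrongDual ℝ V),
        (topDualPairing ℝ V).flip (g x'') ℓ = x'' ℓ := by
      intro x''
      have : J (e.symm (WeakDual.toStrongDual x'')) = WeakDual.toStrongDual x'' :=
        e.apply_symm_apply _
      calc (topDualPairing ℝ V).flip (g x'') ℓ
          = ℓ (e.symm (WeakDual.toStrongDual x'')) := rfl
        _ = (J (e.symm (WeakDual.toStrongDual x''))) ℓ := rfl
        _ = x'' ℓ := by rw [this]; rfl
    simpa only [key] using WeakDual.eval_continuous (𝕜 := ℝ) (E := StrongDual ℝ V) ℓ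
  have himg : toWeakSpace ℝ V '' Metric.closedBall 0 R
      = g '' (WeakDual.toStrongDual ⁻¹' Metric.closedBall 0 R) := by
    ext x
    constructor
    · rintro ⟨v, hv, rfl⟩
      refine ⟨StrongDual.toWeakDual (J v), ?_, ?_⟩
      · exact (dist_zero_right (J v)).trans_le (by rw [J.norm_map]; simpa using hv)
      · simp only [hg]
        congr 1
        exact e.symm_apply_apply v
    · rintro ⟨x'', hx'', rfl⟩
      refine ⟨e.symm (WeakDual.toStrongDual x''), ?_, rfl⟩
      have : ‖(e.symm (WeakDual.toStrongDual x'') : V)‖ = ‖WeakDual.toStrongDual x''‖ := by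
        conv_rhs => rw [← e.apply_symm_apply (WeakDual.toStrongDual x'')]
        exact (J.norm_map _).symm
      rw [Metric.mem_closedBall, dist_zero_right, this]
      exact (dist_zero_right (WeakDual.toStrongDual x'')).symm.trans_le (Metric.mem_closedBall.mp hx'')
  rw [himg]
  exact (WeakDual.isCompact_closedBall (𝕜 := ℝ) (E := StrongDual ℝ V) 0 R).image hgcont

theorem stmt7 {V : Type*} [NormedAddCommGroup V] [NormedSpace ℝ V] [CompleteSpace V]
    (hrefl : Function.Surjective (NormedSpace.inclusionInDoubleDual ℝ V))
    (E : V → EReal)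
    (hconv : ∀ x y : V, ∀ t : ℝ, 0 ≤ t → t ≤ 1 →
      E (t • x + (1 - t) • y) ≤ ((t : ℝ) : EReal) * E x + (((1 - t : ℝ)) : EReal) * E y)
    (hproper : (∀ v, E v ≠ ⊥) ∧ ∃ v, E v ≠ ⊤)
    (hlsc : LowerSemicontinuous E)
    (hcoer : ∀ M : ℝ, ∃ R : ℝ, ∀ v : V, R ≤ ‖v‖ → (M : EReal) ≤ E v) :
    ∃ u : V, ∀ v : V, E u ≤ E v := by
  obtain ⟨hbot, v₀, hv₀⟩ := hproper
  set c₀ : ℝ := (E v₀).toReal with hc₀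
  have hEv₀ : E v₀ = (c₀ : EReal) := (EReal.coe_toReal hv₀ (hbot v₀)).symm
  -- sublevel sets are convex
  have hconvlev : ∀ ρ : ℝ, Convex ℝ {v : V | E v ≤ (ρ : EReal)} := by
    intro ρ x hx y hy a b ha hb hab
    have hb1 : b = 1 - a := by linarith
    subst hb1
    have h1 : E (a • x + (1 - a) • y)
        ≤ ((a : ℝ) : EReal) * E x + (((1 - a : ℝ)) : EReal) * E y :=
      hconv x y a ha (by linarith)
    have h2 : ((a : ℝ) : EReal) * E x + (((1 - a : ℝ)) : EReal) * E y
        ≤ ((a : ℝ) : EReal) * (ρ : EReal) + (((1 - a : ℝ)) : EReal) * (ρ : EReal) :=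
      add_le_add (mul_le_mul_of_nonneg_left hx (by exact_mod_cast ha))
        (mul_le_mul_of_nonneg_left hy (by exact_mod_cast (by linarith : (0:ℝ) ≤ 1 - a)))
    have h3 : ((a : ℝ) : EReal) * (ρ : EReal) + (((1 - a : ℝ)) : EReal) * (ρ : EReal)
        = (ρ : EReal) := by
      rw [← EReal.coe_mul, ← EReal.coe_mul, ← EReal.coe_add]
      norm_cast
      ring
    exact (h1.trans h2).trans_eq h3
  -- sublevel sets are norm-closed
  have hcl : ∀ ρ : ℝ, IsClosed {v : V | E v ≤ (ρ : EReal)} :=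
    fun ρ => hlsc.isClosed_preimage (ρ : EReal)
  -- sublevel sets are weakly closed
  have hwcl : ∀ ρ : ℝ, IsClosed (toWeakSpace ℝ V '' {v : V | E v ≤ (ρ : EReal)}) := by
    intro ρ
    have h1 := (hconvlev ρ).toWeakSpace_closure (𝕜 := ℝ)
    rw [(hcl ρ).closure_eq] at h1
    rw [← closure_eq_iff_isClosed]
    exact h1.symm
  -- coercivity radius for level c₀
  obtain ⟨R, hR⟩ := hcoer (c₀ + 1)
  have hsubball : ∀ ρ : ℝ, ρ ≤ c₀ →
      toWeakSpace ℝ V '' {v : V | E v ≤ (ρ : EReal)}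
        ⊆ toWeakSpace ℝ V '' Metric.closedBall 0 R := by
    rintro ρ hρ x ⟨w, hw, rfl⟩
    refine ⟨w, ?_, rfl⟩
    rw [Metric.mem_closedBall, dist_zero_right]
    by_contra hcon
    push_neg at hcon
    have := hR w hcon.le
    have h2 : E w ≤ ((c₀ : ℝ) : EReal) := hw.trans (by exact_mod_cast hρ)
    have : ((c₀ + 1 : ℝ) : EReal) ≤ ((c₀ : ℝ) : EReal) := this.trans h2
    have : (c₀ + 1 : ℝ) ≤ c₀ := by exact_mod_cast this
    linarith
  -- the directed family of weakly-compact sublevel sets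
  set m : V → EReal := fun v => min (E v) ((c₀ : ℝ) : EReal) with hm
  have hmbot : ∀ v, m v ≠ ⊥ := by
    intro v h
    rcases min_eq_iff.mp h with h' | h'
    · exact hbot v h'.1
    · exact (EReal.coe_ne_bot c₀) h'.1
  have hmtop : ∀ v, m v ≠ ⊤ := by
    intro v h
    have : m v ≤ ((c₀ : ℝ) : EReal) := min_le_right _ _
    rw [h] at this
    exact (EReal.coe_ne_top c₀) (top_le_iff.mp this)
  set r : V → ℝ := fun v => (m v).toReal with hr
  have hmr : ∀ v, m v = ((r v : ℝ) : EReal) :=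
    fun v => (EReal.coe_toReal (hmtop v) (hmbot v)).symm
  have hrle : ∀ v, r v ≤ c₀ := by
    intro v
    have : m v ≤ ((c₀ : ℝ) : EReal) := min_le_right _ _
    rw [hmr v] at this
    exact_mod_cast this
  set t : V → Set (WeakSpace ℝ V) :=
    fun v => toWeakSpace ℝ V '' {w : V | E w ≤ ((r v : ℝ) : EReal)} with ht
  have htne : ∀ v, (t v).Nonempty := by
    intro v
    by_cases h : E v ≤ ((c₀ : ℝ) : EReal)
    · refine ⟨toWeakSpace ℝ V v, v, ?_, rfl⟩
      show E v ≤ ((r v : ℝ) : EReal)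
      rw [← hmr v]
      exact le_min (le_refl _) h
    · refine ⟨toWeakSpace ℝ V v₀, v₀, ?_, rfl⟩
      show E v₀ ≤ ((r v : ℝ) : EReal)
      have hmv : m v = ((c₀ : ℝ) : EReal) := min_eq_right (le_of_not_ge h)
      rw [← hmr v, hmv, hEv₀]
  have htmono : ∀ v w, m v ≤ m w → t v ⊆ t w := by
    intro v w hvw
    apply Set.image_mono
    intro z hz
    simp only [Set.mem_setOf_eq] at hz ⊢
    refine hz.trans ?_
    rw [← hmr v, ← hmr w]
    exact hvw
  have htdir : Directed (· ⊇ ·) t := by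
    intro v w
    by_cases h : E v ≤ E w
    · exact ⟨v, le_refl _, htmono v w (min_le_min_right _ h)⟩
    · exact ⟨w, htmono w v (min_le_min_right _ (le_of_not_ge h)), le_refl _⟩
  have htcl : ∀ v, IsClosed (t v) := fun v => hwcl (r v)
  have htcomp : ∀ v, IsCompact (t v) := by
    intro v
    exact (aux_weak_ball_compact hrefl R).of_isClosed_subset (htcl v)
      (hsubball (r v) (hrle v))
  have : Nonempty V := ⟨0⟩
  obtain ⟨x, hx⟩ := IsCompact.nonempty_iInter_of_directed_nonempty_isCompact_isClosed
    t htdir htne htcomp htcl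
  set u : V := (toWeakSpace ℝ V).symm x with hu
  refine ⟨u, fun v => ?_⟩
  have hxv := Set.mem_iInter.mp hx v
  obtain ⟨w, hw, hwx⟩ := hxv
  have hwu : w = u := by
    rw [hu, ← hwx]
    exact ((toWeakSpace ℝ V).symm_apply_apply w).symm
  rw [← hwu]
  refine hw.trans ?_
  rw [← hmr v]
  exact min_le_left _ _
end

section
/- Let E : V → ℝ be convex and Gateaux differentiable on a real vector space V, with minimizer u over V and minimizer u_h over a subspace V_h ⊆ V. Then for every v_h ∈ V_h, E(u_h) − E(u) ≤ DE(u)[u − v_h] − DE(u_h)[u − v_h], i.e., the energy error is controlled by the difference of derivatives tested with the best-approximation error. -/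
open scoped RealInnerProductSpace
open MeasureTheory
open Filter Topology

-- slope tendsto from the right
lemma tendsto_slope_right {g : ℝ → ℝ} {c : ℝ} (hg : HasDerivAt g c 0) :
    Tendsto (fun t : ℝ => (g t - g 0) / t) (𝓝[>] 0) (𝓝 c) := by
  have h := hg.tendsto_slope_zero.mono_left
    (nhdsWithin_mono (s := Set.Ioi (0:ℝ)) 0 (by intro x hx; exact ne_of_gt hx))
  simpa [div_eq_inv_mul] using h

lemma deriv_le_of_slope {g : ℝ → ℝ} {c : ℝ} (hg : HasDerivAt g c 0) (M : ℝ)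
    (h : ∀ t ∈ Set.Ioo (0:ℝ) 1, (g t - g 0) / t ≤ M) : c ≤ M := by
  refine le_of_tendsto (tendsto_slope_right hg) ?_
  filter_upwards [Ioo_mem_nhdsGT_of_mem (by norm_num : (0:ℝ) ∈ Set.Ico (0:ℝ) 1)] with t ht
  exact h t ht

theorem stmt10 {V : Type*} [AddCommGroup V] [Module ℝ V]
    (E : V → ℝ) (hconv : ConvexOn ℝ Set.univ E)
    (DE : V → V → ℝ)
    (hDE : ∀ u v : V, HasDerivAt (fun t : ℝ => E (u + t • v)) (DE u v) 0)
    (V_h : Submodule ℝ V)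
    (u : V) (hu : ∀ v : V, E u ≤ E v)
    (u_h : V) (hu_h : u_h ∈ V_h) (hmin : ∀ v ∈ V_h, E u_h ≤ E v) :
    ∀ v_h ∈ V_h, E u_h - E u ≤ DE u (u - v_h) - DE u_h (u - v_h) := by
  intro v_h hv_h
  -- stationarity at the global minimizer u
  have hDEu : DE u (u - v_h) = 0 := by
    have hmin0 : IsLocalMin (fun t : ℝ => E (u + t • (u - v_h))) 0 := by
      apply Filter.Eventually.of_forall
      intro t
      simpa using hu (u + t • (u - v_h))
    exact hmin0.hasDerivAt_eq_zero (hDE u (u - v_h))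
  -- stationarity of u_h in directions inside V_h
  have hDEuh0 : DE u_h (u_h - v_h) = 0 := by
    have hmin0 : IsLocalMin (fun t : ℝ => E (u_h + t • (u_h - v_h))) 0 := by
      apply Filter.Eventually.of_forall
      intro t
      have hm : u_h + t • (u_h - v_h) ∈ V_h :=
        V_h.add_mem hu_h (V_h.smul_mem t (V_h.sub_mem hu_h hv_h))
      simpa using hmin _ hm
    exact hmin0.hasDerivAt_eq_zero (hDE u_h (u_h - v_h))
  -- gradient inequality: DE u_h (u - u_h) ≤ E u - E u_h
  have hgrad : DE u_h (u - u_h) ≤ E u - E u_h := by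
    apply deriv_le_of_slope (hDE u_h (u - u_h))
    intro t ht
    rw [div_le_iff₀ ht.1]
    have hc := hconv.2 (Set.mem_univ u_h) (Set.mem_univ u)
      (by linarith [ht.2] : (0:ℝ) ≤ 1 - t) (le_of_lt ht.1) (by ring)
    have : E (u_h + t • (u - u_h)) ≤ (1 - t) * E u_h + t * E u := by
      have heq : (1 - t) • u_h + t • u = u_h + t • (u - u_h) := by
        rw [smul_sub]; module
      rw [heq] at hc
      simpa [smul_eq_mul] using hc
    simp only [zero_smul, add_zero]
    nlinarith [this]
  -- subadditivity: DE u_h (u - v_h) ≤ DE u_h (u - u_h) + DE u_h (u_h - v_h)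
  have hsub : DE u_h (u - v_h) ≤ DE u_h (u - u_h) + DE u_h (u_h - v_h) := by
    set a := u - u_h
    set b := u_h - v_h
    have hab : u - v_h = a + b := by simp [a, b]
    rw [hab]
    have h2 : Tendsto (fun t : ℝ => (2:ℝ) * t) (𝓝[>] 0) (𝓝[>] 0) := by
      apply tendsto_nhdsWithin_of_tendsto_nhds_of_eventually_within
      · have hcont : Tendsto (fun t : ℝ => (2:ℝ) * t) (𝓝 0) (𝓝 0) := by
          exact (continuous_mul_left (2:ℝ)).tendsto' 0 0 (by simp)
        exact hcont.mono_left nhdsWithin_le_nhds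
      · filter_upwards [self_mem_nhdsWithin] with t ht
        exact mul_pos two_pos (show (0:ℝ) < t from ht)
    have ta : Tendsto (fun t : ℝ => (E (u_h + (2*t) • a) - E (u_h + (0:ℝ) • a)) / (2*t))
        (𝓝[>] 0) (𝓝 (DE u_h a)) := (tendsto_slope_right (hDE u_h a)).comp h2
    have tb : Tendsto (fun t : ℝ => (E (u_h + (2*t) • b) - E (u_h + (0:ℝ) • b)) / (2*t))
        (𝓝[>] 0) (𝓝 (DE u_h b)) := (tendsto_slope_right (hDE u_h b)).comp h2
    refine le_of_tendsto_of_tendsto (tendsto_slope_right (hDE u_h (a + b))) (ta.add tb) ?_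
    filter_upwards [self_mem_nhdsWithin] with t (ht : 0 < t)
    have hc := hconv.2 (Set.mem_univ (u_h + (2*t) • a)) (Set.mem_univ (u_h + (2*t) • b))
      (by norm_num : (0:ℝ) ≤ 1/2) (by norm_num : (0:ℝ) ≤ 1/2) (by norm_num)
    have heq : (1/2 : ℝ) • (u_h + (2*t) • a) + (1/2 : ℝ) • (u_h + (2*t) • b)
        = u_h + t • (a + b) := by module
    rw [heq] at hc
    simp only [smul_eq_mul, zero_smul, add_zero] at hc ⊢
    have h2t : (0:ℝ) < 2 * t := by linarith
    rw [← add_div, div_le_div_iff₀ ht h2t]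
    nlinarith [hc]
  linarith
end

section
/- Let p ≥ 2 and W ∈ C¹(ℝ^n) convex satisfying the convexity control (B3). Then for all α, β ∈ L^p(Ω; ℝ^n) on a finite measure space Ω, ‖DW(α) − DW(β)‖_{L^{p'}}² / (1 + ‖α‖_{L^p}^p + ‖β‖_{L^p}^p)^{(2−p')/p'} ≤ C ∫_Ω (W(β) − W(α) − DW(α)⋅(β − α)) dx, where p' = p/(p−1) and C depends only on c₅, p, |Ω|. -/
open scoped RealInnerProductSpace ENNReal
open MeasureTheory

lemma sum3_rpow_le {x y : ℝ≥0∞} {r : ℝ} (hr : 0 ≤ r) :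
    (1 + x + y) ^ r ≤ 3 ^ r * (1 + x ^ r + y ^ r) := by
  have hmono : Monotone fun z : ℝ≥0∞ => z ^ r := fun a b hab => ENNReal.rpow_le_rpow hab hr
  have hm : (1 : ℝ≥0∞) + x + y ≤ 3 * (1 ⊔ x ⊔ y) := by
    have h1 : (1:ℝ≥0∞) ≤ 1 ⊔ x ⊔ y := le_sup_of_le_left le_sup_left
    have h2 : x ≤ 1 ⊔ x ⊔ y := le_sup_of_le_left le_sup_right
    have h3 : y ≤ 1 ⊔ x ⊔ y := le_sup_right
    calc (1:ℝ≥0∞) + x + y ≤ (1 ⊔ x ⊔ y) + (1 ⊔ x ⊔ y) + (1 ⊔ x ⊔ y) := by gcongr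
      _ = 3 * (1 ⊔ x ⊔ y) := by ring
  calc (1 + x + y) ^ r ≤ (3 * (1 ⊔ x ⊔ y)) ^ r := ENNReal.rpow_le_rpow hm hr
    _ = 3 ^ r * (1 ⊔ x ⊔ y) ^ r := ENNReal.mul_rpow_of_nonneg _ _ hr
    _ ≤ 3 ^ r * (1 + x ^ r + y ^ r) := by
        gcongr
        have hsup : (1 ⊔ x ⊔ y) ^ r = 1 ^ r ⊔ x ^ r ⊔ y ^ r := by
          rw [hmono.map_sup, hmono.map_sup]
        rw [hsup, ENNReal.one_rpow]
        exact sup_le (sup_le (le_self_add.trans le_self_add)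
          (le_add_self.trans le_self_add)) le_add_self

lemma final_step {n : ℕ} {Ω : Type*} [MeasurableSpace Ω] (μ : Measure Ω)
    [IsFiniteMeasure μ] {p q C₀ : ℝ} (hp : 2 ≤ p) (hq : q = p / (p - 1)) (hC₀ : 0 < C₀)
    (α β : Ω → EuclideanSpace ℝ (Fin n)) (g : Ω → EuclideanSpace ℝ (Fin n)) (D : Ω → ℝ)
    (hα : MemLp α (ENNReal.ofReal p) μ) (hβ : MemLp β (ENNReal.ofReal p) μ)
    (hDnn : 0 ≤ ∫ x, D x ∂μ)
    (key : (∫⁻ x, (‖g x‖₊ : ℝ≥0∞) ^ q ∂μ) ^ (2 / q) ≤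
      ENNReal.ofReal C₀ * ENNReal.ofReal (∫ x, D x ∂μ) *
        ((1 : ℝ≥0∞) + (∫⁻ x, (‖α x‖₊ : ℝ≥0∞) ^ p ∂μ) + ∫⁻ x, (‖β x‖₊ : ℝ≥0∞) ^ p ∂μ)
          ^ ((2 - q) / q)) :
    (eLpNorm g (ENNReal.ofReal q) μ).toReal ^ 2 /
      (1 + (eLpNorm α (ENNReal.ofReal p) μ).toReal ^ p
         + (eLpNorm β (ENNReal.ofReal p) μ).toReal ^ p) ^ ((2 - q) / q)
      ≤ C₀ * ∫ x, D x ∂μ := by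
  have hp0 : (0:ℝ) < p := by linarith
  have hq0 : 0 < q := by rw [hq]; exact div_pos (by linarith) (by linarith)
  have hq2 : q ≤ 2 := by rw [hq, div_le_iff₀ (by linarith)]; linarith
  have he0 : 0 ≤ (2 - q) / q := div_nonneg (by linarith) hq0.le
  set Ha := ∫⁻ x, (‖α x‖₊ : ℝ≥0∞) ^ p ∂μ with hHa
  set Hb := ∫⁻ x, (‖β x‖₊ : ℝ≥0∞) ^ p ∂μ with hHb
  set G := ∫⁻ x, (‖g x‖₊ : ℝ≥0∞) ^ q ∂μ with hG
  have hpne : ENNReal.ofReal p ≠ 0 := by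
    simp only [ne_eq, ENNReal.ofReal_eq_zero, not_le]; exact hp0
  have hqne : ENNReal.ofReal q ≠ 0 := by
    simp only [ne_eq, ENNReal.ofReal_eq_zero, not_le]; exact hq0
  have hA : Ha ≠ ∞ := by
    have h := lintegral_rpow_enorm_lt_top_of_eLpNorm_lt_top hpne ENNReal.ofReal_ne_top
      hα.eLpNorm_lt_top
    rw [ENNReal.toReal_ofReal hp0.le] at h
    exact h.ne
  have hB : Hb ≠ ∞ := by
    have h := lintegral_rpow_enorm_lt_top_of_eLpNorm_lt_top hpne ENNReal.ofReal_ne_top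
      hβ.eLpNorm_lt_top
    rw [ENNReal.toReal_ofReal hp0.le] at h
    exact h.ne
  have hsum_ne : (1 + Ha + Hb) ≠ ∞ :=
    ENNReal.add_ne_top.mpr ⟨ENNReal.add_ne_top.mpr ⟨ENNReal.one_ne_top, hA⟩, hB⟩
  have hα_eq : (eLpNorm α (ENNReal.ofReal p) μ).toReal ^ p = Ha.toReal := by
    rw [eLpNorm_eq_lintegral_rpow_enorm_toReal hpne ENNReal.ofReal_ne_top,
      ENNReal.toReal_ofReal hp0.le, ← ENNReal.toReal_rpow, ← Real.rpow_mul ENNReal.toReal_nonneg,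
      one_div_mul_cancel hp0.ne', Real.rpow_one]; rfl
  have hβ_eq : (eLpNorm β (ENNReal.ofReal p) μ).toReal ^ p = Hb.toReal := by
    rw [eLpNorm_eq_lintegral_rpow_enorm_toReal hpne ENNReal.ofReal_ne_top,
      ENNReal.toReal_ofReal hp0.le, ← ENNReal.toReal_rpow, ← Real.rpow_mul ENNReal.toReal_nonneg,
      one_div_mul_cancel hp0.ne', Real.rpow_one]; rfl
  have hRHS_ne : ENNReal.ofReal C₀ * ENNReal.ofReal (∫ x, D x ∂μ) *
      (1 + Ha + Hb) ^ ((2 - q) / q) ≠ ∞ :=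
    ENNReal.mul_ne_top (ENNReal.mul_ne_top ENNReal.ofReal_ne_top ENNReal.ofReal_ne_top)
      (ENNReal.rpow_ne_top_of_nonneg he0 hsum_ne)
  have hle : G.toReal ^ (2 / q) ≤
      C₀ * (∫ x, D x ∂μ) * ((1 + Ha + Hb).toReal) ^ ((2 - q) / q) := by
    have h := ENNReal.toReal_mono hRHS_ne key
    rwa [← ENNReal.toReal_rpow, ENNReal.toReal_mul, ENNReal.toReal_mul,
      ENNReal.toReal_ofReal hC₀.le, ENNReal.toReal_ofReal hDnn,
      ← ENNReal.toReal_rpow] at h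
  have hg_eq : (eLpNorm g (ENNReal.ofReal q) μ).toReal ^ 2 = G.toReal ^ (2 / q) := by
    rw [eLpNorm_eq_lintegral_rpow_enorm_toReal hqne ENNReal.ofReal_ne_top,
      ENNReal.toReal_ofReal hq0.le, ← ENNReal.toReal_rpow,
      ← Real.rpow_natCast (_ ^ (1 / q)) 2, ← Real.rpow_mul ENNReal.toReal_nonneg]
    congr 1
    push_cast
    field_simp
  have hden_eq : (1 + (eLpNorm α (ENNReal.ofReal p) μ).toReal ^ p
      + (eLpNorm β (ENNReal.ofReal p) μ).toReal ^ p) = (1 + Ha + Hb).toReal := by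
    rw [hα_eq, hβ_eq, ENNReal.toReal_add (ENNReal.add_ne_top.mpr ⟨ENNReal.one_ne_top, hA⟩) hB,
      ENNReal.toReal_add ENNReal.one_ne_top hA, ENNReal.toReal_one]
  have hden_pos : 0 < (1 + (eLpNorm α (ENNReal.ofReal p) μ).toReal ^ p
      + (eLpNorm β (ENNReal.ofReal p) μ).toReal ^ p) ^ ((2 - q) / q) := by
    apply Real.rpow_pos_of_pos
    have h1 : 0 ≤ (eLpNorm α (ENNReal.ofReal p) μ).toReal ^ p := Real.rpow_nonneg ENNReal.toReal_nonneg p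
    have h2 : 0 ≤ (eLpNorm β (ENNReal.ofReal p) μ).toReal ^ p := Real.rpow_nonneg ENNReal.toReal_nonneg p
    linarith
  rw [div_le_iff₀ hden_pos, hg_eq, hden_eq]
  exact hle

theorem stmt12 {n : ℕ} {Ω : Type*} [MeasurableSpace Ω] (μ : Measure Ω)
    [IsFiniteMeasure μ] (p c₅ : ℝ) (hp : 2 ≤ p) (hc₅ : 0 < c₅)
    (W : EuclideanSpace ℝ (Fin n) → ℝ) (hW : ConvexOn ℝ Set.univ W)
    (hC1 : ContDiff ℝ 1 W)
    (hB3 : ∀ a b, ‖gradient W a - gradient W b‖ ^ 2 / (1 + ‖a‖ ^ (p - 2) + ‖b‖ ^ (p - 2))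
      ≤ c₅ * (W b - W a - ⟪gradient W a, b - a⟫)) :
    ∃ C : ℝ, 0 < C ∧ ∀ α β : Ω → EuclideanSpace ℝ (Fin n),
      MemLp α (ENNReal.ofReal p) μ → MemLp β (ENNReal.ofReal p) μ →
      Integrable (fun x => W (β x) - W (α x) - ⟪gradient W (α x), β x - α x⟫) μ →
      (eLpNorm (fun x => gradient W (α x) - gradient W (β x))
          (ENNReal.ofReal (p / (p - 1))) μ).toReal ^ 2 /
        (1 + (eLpNorm α (ENNReal.ofReal p) μ).toReal ^ p
           + (eLpNorm β (ENNReal.ofReal p) μ).toReal ^ p)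
          ^ ((2 - p / (p - 1)) / (p / (p - 1)))
      ≤ C * ∫ x, (W (β x) - W (α x) - ⟪gradient W (α x), β x - α x⟫) ∂μ := by
  have hp0 : (0:ℝ) < p := by linarith
  have hp1 : (1:ℝ) < p := by linarith
  set q : ℝ := p / (p - 1) with hq
  have hq0 : 0 < q := div_pos (by linarith) (by linarith)
  have hq2 : q ≤ 2 := by rw [hq, div_le_iff₀ (by linarith)]; linarith
  -- pointwise nonnegativity of the "defect"
  have hDnn : ∀ a b : EuclideanSpace ℝ (Fin n),
      0 ≤ W b - W a - ⟪gradient W a, b - a⟫ := by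
    intro a b
    have h := hB3 a b
    have hden : (0:ℝ) < 1 + ‖a‖ ^ (p - 2) + ‖b‖ ^ (p - 2) := by positivity
    have h0 : 0 ≤ c₅ * (W b - W a - ⟪gradient W a, b - a⟫) :=
      le_trans (div_nonneg (by positivity) hden.le) h
    nlinarith
  -- pointwise quadratic bound
  have hptw : ∀ a b : EuclideanSpace ℝ (Fin n),
      ‖gradient W a - gradient W b‖ ^ 2 ≤
      c₅ * (W b - W a - ⟪gradient W a, b - a⟫) * (1 + ‖a‖ ^ (p - 2) + ‖b‖ ^ (p - 2)) := by
    intro a b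
    have h := hB3 a b
    have hden : (0:ℝ) < 1 + ‖a‖ ^ (p - 2) + ‖b‖ ^ (p - 2) := by positivity
    calc ‖gradient W a - gradient W b‖ ^ 2
        = ‖gradient W a - gradient W b‖ ^ 2 / (1 + ‖a‖ ^ (p - 2) + ‖b‖ ^ (p - 2))
          * (1 + ‖a‖ ^ (p - 2) + ‖b‖ ^ (p - 2)) := by field_simp
      _ ≤ c₅ * (W b - W a - ⟪gradient W a, b - a⟫) * (1 + ‖a‖ ^ (p - 2) + ‖b‖ ^ (p - 2)) :=
          mul_le_mul_of_nonneg_right h hden.le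
  -- pointwise ENNReal bound
  have hptwE : ∀ a b : EuclideanSpace ℝ (Fin n),
      (‖gradient W a - gradient W b‖₊ : ℝ≥0∞) ^ q ≤
      (ENNReal.ofReal (c₅ * (W b - W a - ⟪gradient W a, b - a⟫)) *
        ENNReal.ofReal (1 + ‖a‖ ^ (p - 2) + ‖b‖ ^ (p - 2))) ^ (q / 2) := by
    intro a b
    have hD := hDnn a b
    have h2 := hptw a b
    have hden : (0:ℝ) ≤ 1 + ‖a‖ ^ (p - 2) + ‖b‖ ^ (p - 2) := by positivity
    rw [← ENNReal.ofReal_mul (by positivity),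
      ENNReal.ofReal_rpow_of_nonneg (by positivity) (by positivity),
      ← enorm_eq_nnnorm, ← ofReal_norm,
      ENNReal.ofReal_rpow_of_nonneg (norm_nonneg _) hq0.le]
    apply ENNReal.ofReal_le_ofReal
    calc ‖gradient W a - gradient W b‖ ^ q
        = (‖gradient W a - gradient W b‖ ^ 2) ^ (q / 2) := by
          rw [← Real.rpow_natCast ‖gradient W a - gradient W b‖ 2,
            ← Real.rpow_mul (norm_nonneg _)]
          congr 1
          push_cast
          ring
      _ ≤ (c₅ * (W b - W a - ⟪gradient W a, b - a⟫)
            * (1 + ‖a‖ ^ (p - 2) + ‖b‖ ^ (p - 2))) ^ (q / 2) :=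
          Real.rpow_le_rpow (by positivity) h2 (by positivity)
  -- gradient continuity
  have hgrad_cont : Continuous (gradient W) := by
    have h1 : Continuous (fderiv ℝ W) := hC1.continuous_fderiv one_ne_zero
    exact ((InnerProductSpace.toDual ℝ _).symm.continuous.comp h1 : _)
  rcases eq_or_lt_of_le hp with hpeq | hplt
  · -- p = 2
    refine ⟨3 * c₅, by positivity, ?_⟩
    intro α β hα hβ hD
    have hq22 : q = 2 := by rw [hq, ← hpeq]; norm_num
    have hint_nn : 0 ≤ ∫ x, (W (β x) - W (α x) - ⟪gradient W (α x), β x - α x⟫) ∂μ :=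
      integral_nonneg fun x => hDnn _ _
    apply final_step μ hp hq (by positivity) α β _ _ hα hβ hint_nn
    have e1 : (2:ℝ)/2 = 1 := by norm_num
    have e2 : ((2:ℝ)-2)/2 = 0 := by norm_num
    rw [hq22, e1, e2, ENNReal.rpow_one, ENNReal.rpow_zero, mul_one]
    calc (∫⁻ x, (‖gradient W (α x) - gradient W (β x)‖₊ : ℝ≥0∞) ^ (2:ℝ) ∂μ)
        ≤ ∫⁻ x, ENNReal.ofReal (3 * c₅) *
            ENNReal.ofReal (W (β x) - W (α x) - ⟪gradient W (α x), β x - α x⟫) ∂μ := by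
          apply lintegral_mono
          intro x
          have h := hptwE (α x) (β x)
          have hp2 : p - 2 = 0 := by rw [← hpeq]; ring
          rw [hq22, e1, ENNReal.rpow_one, hp2, Real.rpow_zero, Real.rpow_zero,
            show (1:ℝ)+1+1 = 3 by norm_num] at h
          calc (‖gradient W (α x) - gradient W (β x)‖₊ : ℝ≥0∞) ^ (2:ℝ)
              ≤ ENNReal.ofReal (c₅ * (W (β x) - W (α x) - ⟪gradient W (α x), β x - α x⟫)) *
                ENNReal.ofReal 3 := h
            _ = ENNReal.ofReal (3 * c₅) *
                ENNReal.ofReal (W (β x) - W (α x) - ⟪gradient W (α x), β x - α x⟫) := by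
                rw [← ENNReal.ofReal_mul (mul_nonneg hc₅.le (hDnn _ _)),
                  ← ENNReal.ofReal_mul (mul_nonneg (by norm_num : (0:ℝ) ≤ 3) hc₅.le)]
                congr 1
                ring
      _ = ENNReal.ofReal (3 * c₅) *
            ∫⁻ x, ENNReal.ofReal (W (β x) - W (α x) - ⟪gradient W (α x), β x - α x⟫) ∂μ :=
          lintegral_const_mul' _ _ ENNReal.ofReal_ne_top
      _ = ENNReal.ofReal (3 * c₅) *
            ENNReal.ofReal (∫ x, (W (β x) - W (α x) - ⟪gradient W (α x), β x - α x⟫) ∂μ) := by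
          rw [ofReal_integral_eq_lintegral_ofReal hD (Filter.Eventually.of_forall fun x => hDnn _ _)]
  · -- p > 2
    have hq_lt2 : q < 2 := by rw [hq, div_lt_iff₀ (by linarith)]; linarith
    have hp2nn : (0:ℝ) ≤ p - 2 := by linarith
    set r : ℝ := p / (p - 2) with hr
    have hr0 : 0 ≤ r := by rw [hr]; positivity
    set e : ℝ := (2 - q) / q with he
    have he0 : 0 ≤ e := div_nonneg (by linarith) hq0.le
    set M : ℝ≥0∞ := μ Set.univ ⊔ 1 with hM
    have hM_ne : M ≠ ∞ := (sup_lt_iff.mpr ⟨measure_lt_top μ _, ENNReal.one_lt_top⟩).ne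
    have h3r_ne : (3:ℝ≥0∞) ^ r ≠ ∞ := ENNReal.rpow_ne_top_of_nonneg hr0 (by norm_num)
    set K : ℝ≥0∞ := 3 ^ r * M with hK
    have hK_ne : K ≠ ∞ := ENNReal.mul_ne_top h3r_ne hM_ne
    have hK_ne0 : K ≠ 0 := by
      apply mul_ne_zero
      · exact (ENNReal.rpow_pos (by norm_num) (by norm_num)).ne'
      · exact (lt_of_lt_of_le one_pos le_sup_right).ne'
    have hK_pos : 0 < K.toReal := ENNReal.toReal_pos hK_ne0 hK_ne
    have c1 : q / 2 * (2 / q) = 1 := by field_simp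
    have c2 : q / 2 * (2 / (2 - q)) = r := by
      rw [hq, hr]
      have h1 : p - 1 ≠ 0 := by intro h; rw [sub_eq_zero] at h; linarith
      have h2 : p - 2 ≠ 0 := by intro h; rw [sub_eq_zero] at h; linarith
      have h3 : 2 - p / (p - 1) = (p - 2) / (p - 1) := by field_simp; ring
      rw [h3]
      field_simp
    have c3 : (2 - q) / 2 * (2 / q) = e := by rw [he]; field_simp
    have hpr : (p - 2) * r = p := by
      have h2 : p - 2 ≠ 0 := by intro h; rw [sub_eq_zero] at h; linarith
      rw [hr]
      field_simp
    refine ⟨c₅ * K.toReal ^ e, by positivity, ?_⟩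
    intro α β hα hβ hD
    have hint_nn : 0 ≤ ∫ x, (W (β x) - W (α x) - ⟪gradient W (α x), β x - α x⟫) ∂μ :=
      integral_nonneg fun x => hDnn _ _
    apply final_step μ hp hq (by positivity) α β _ _ hα hβ hint_nn
    rw [← he]
    -- measurability
    have hDm : AEMeasurable (fun x => W (β x) - W (α x) - ⟪gradient W (α x), β x - α x⟫) μ :=
      hD.aestronglyMeasurable.aemeasurable
    have hf_meas : AEMeasurable
        (fun x => ENNReal.ofReal (c₅ * (W (β x) - W (α x) - ⟪gradient W (α x), β x - α x⟫))
          ^ (q / 2)) μ :=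
      ((hDm.const_mul c₅).ennreal_ofReal).pow aemeasurable_const
    have hαnorm : AEMeasurable (fun x => (‖α x‖₊ : ℝ≥0∞)) μ := hα.aestronglyMeasurable.enorm
    have hβnorm : AEMeasurable (fun x => (‖β x‖₊ : ℝ≥0∞)) μ := hβ.aestronglyMeasurable.enorm
    have hαr : AEMeasurable (fun x => ‖α x‖ ^ (p - 2)) μ :=
      (hα.aestronglyMeasurable.norm.aemeasurable).pow aemeasurable_const
    have hβr : AEMeasurable (fun x => ‖β x‖ ^ (p - 2)) μ :=
      (hβ.aestronglyMeasurable.norm.aemeasurable).pow aemeasurable_const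
    have hh_meas : AEMeasurable
        (fun x => ENNReal.ofReal (1 + ‖α x‖ ^ (p - 2) + ‖β x‖ ^ (p - 2)) ^ (q / 2)) μ :=
      (((aemeasurable_const.add hαr).add hβr).ennreal_ofReal).pow aemeasurable_const
    -- Hölder
    have hconj : Real.HolderConjugate (2 / q) (2 / (2 - q)) := by
      rw [Real.holderConjugate_iff]
      constructor
      · exact (one_lt_div hq0).mpr hq_lt2
      · rw [inv_div, inv_div]; ring
    have step1 : (∫⁻ x, (‖gradient W (α x) - gradient W (β x)‖₊ : ℝ≥0∞) ^ q ∂μ) ≤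
        ∫⁻ x, (ENNReal.ofReal (c₅ * (W (β x) - W (α x) - ⟪gradient W (α x), β x - α x⟫))
            ^ (q / 2)) *
          (ENNReal.ofReal (1 + ‖α x‖ ^ (p - 2) + ‖β x‖ ^ (p - 2)) ^ (q / 2)) ∂μ := by
      apply lintegral_mono
      intro x
      refine le_trans (hptwE (α x) (β x)) ?_
      rw [ENNReal.mul_rpow_of_nonneg _ _ (by positivity)]
    have step2 := ENNReal.lintegral_mul_le_Lp_mul_Lq μ hconj hf_meas hh_meas
    simp only [Pi.mul_apply] at step2
    simp only [← ENNReal.rpow_mul] at step2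
    rw [c1, c2] at step2
    simp only [ENNReal.rpow_one] at step2
    rw [one_div_div, one_div_div] at step2
    -- the D-integral
    have hDint_eq : ∫⁻ x, ENNReal.ofReal
        (c₅ * (W (β x) - W (α x) - ⟪gradient W (α x), β x - α x⟫)) ∂μ =
        ENNReal.ofReal c₅ *
          ENNReal.ofReal (∫ x, (W (β x) - W (α x) - ⟪gradient W (α x), β x - α x⟫) ∂μ) := by
      simp_rw [ENNReal.ofReal_mul hc₅.le]
      rw [lintegral_const_mul' _ _ ENNReal.ofReal_ne_top,
        ofReal_integral_eq_lintegral_ofReal hD (Filter.Eventually.of_forall fun x => hDnn _ _)]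
    -- the weight integral
    have hH_bound : ∫⁻ x, ENNReal.ofReal (1 + ‖α x‖ ^ (p - 2) + ‖β x‖ ^ (p - 2)) ^ r ∂μ ≤
        K * (1 + (∫⁻ x, (‖α x‖₊ : ℝ≥0∞) ^ p ∂μ) + ∫⁻ x, (‖β x‖₊ : ℝ≥0∞) ^ p ∂μ) := by
      have hptH : ∀ x, ENNReal.ofReal (1 + ‖α x‖ ^ (p - 2) + ‖β x‖ ^ (p - 2)) ^ r ≤
          3 ^ r * (1 + (‖α x‖₊ : ℝ≥0∞) ^ p + (‖β x‖₊ : ℝ≥0∞) ^ p) := by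
        intro x
        have hofr : ENNReal.ofReal (1 + ‖α x‖ ^ (p - 2) + ‖β x‖ ^ (p - 2)) =
            1 + (‖α x‖₊ : ℝ≥0∞) ^ (p - 2) + (‖β x‖₊ : ℝ≥0∞) ^ (p - 2) := by
          rw [ENNReal.ofReal_add (by positivity) (Real.rpow_nonneg (norm_nonneg _) _),
            ENNReal.ofReal_add (by norm_num) (Real.rpow_nonneg (norm_nonneg _) _),
            ENNReal.ofReal_one,
            ← ENNReal.ofReal_rpow_of_nonneg (norm_nonneg _) hp2nn,
            ← ENNReal.ofReal_rpow_of_nonneg (norm_nonneg _) hp2nn,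
            ofReal_norm, ofReal_norm, enorm_eq_nnnorm, enorm_eq_nnnorm]
        rw [hofr]
        refine le_trans (sum3_rpow_le hr0) ?_
        rw [← ENNReal.rpow_mul, ← ENNReal.rpow_mul, hpr]
      calc ∫⁻ x, ENNReal.ofReal (1 + ‖α x‖ ^ (p - 2) + ‖β x‖ ^ (p - 2)) ^ r ∂μ
          ≤ ∫⁻ x, 3 ^ r * (1 + (‖α x‖₊ : ℝ≥0∞) ^ p + (‖β x‖₊ : ℝ≥0∞) ^ p) ∂μ :=
            lintegral_mono hptH
        _ = 3 ^ r * (μ Set.univ + (∫⁻ x, (‖α x‖₊ : ℝ≥0∞) ^ p ∂μ)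
              + ∫⁻ x, (‖β x‖₊ : ℝ≥0∞) ^ p ∂μ) := by
            rw [lintegral_const_mul' _ _ h3r_ne]
            congr 1
            rw [lintegral_add_right' _ (hβnorm.pow aemeasurable_const),
              lintegral_add_right' _ (hαnorm.pow aemeasurable_const), lintegral_one]
        _ ≤ 3 ^ r * (M * (1 + (∫⁻ x, (‖α x‖₊ : ℝ≥0∞) ^ p ∂μ)
              + ∫⁻ x, (‖β x‖₊ : ℝ≥0∞) ^ p ∂μ)) := by
            gcongr
            calc μ Set.univ + (∫⁻ x, (‖α x‖₊ : ℝ≥0∞) ^ p ∂μ) + ∫⁻ x, (‖β x‖₊ : ℝ≥0∞) ^ p ∂μ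
                ≤ M * 1 + M * (∫⁻ x, (‖α x‖₊ : ℝ≥0∞) ^ p ∂μ)
                  + M * ∫⁻ x, (‖β x‖₊ : ℝ≥0∞) ^ p ∂μ := by
                  refine add_le_add (add_le_add ?_ ?_) ?_
                  · rw [mul_one]; exact le_sup_left
                  · exact le_mul_of_one_le_left zero_le le_sup_right
                  · exact le_mul_of_one_le_left zero_le le_sup_right
              _ = M * (1 + (∫⁻ x, (‖α x‖₊ : ℝ≥0∞) ^ p ∂μ)
                  + ∫⁻ x, (‖β x‖₊ : ℝ≥0∞) ^ p ∂μ) := by ring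
        _ = K * (1 + (∫⁻ x, (‖α x‖₊ : ℝ≥0∞) ^ p ∂μ) + ∫⁻ x, (‖β x‖₊ : ℝ≥0∞) ^ p ∂μ) := by
            rw [hK, mul_assoc]
    -- combine
    have hGle : (∫⁻ x, (‖gradient W (α x) - gradient W (β x)‖₊ : ℝ≥0∞) ^ q ∂μ) ≤
        (ENNReal.ofReal c₅ *
          ENNReal.ofReal (∫ x, (W (β x) - W (α x) - ⟪gradient W (α x), β x - α x⟫) ∂μ))
            ^ (q / 2) *
        (K * (1 + (∫⁻ x, (‖α x‖₊ : ℝ≥0∞) ^ p ∂μ) + ∫⁻ x, (‖β x‖₊ : ℝ≥0∞) ^ p ∂μ))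
            ^ ((2 - q) / 2) := by
      refine step1.trans (step2.trans ?_)
      rw [hDint_eq]
      exact mul_le_mul_right
        (ENNReal.rpow_le_rpow hH_bound (div_nonneg (by linarith) (by norm_num))) _
    calc (∫⁻ x, (‖gradient W (α x) - gradient W (β x)‖₊ : ℝ≥0∞) ^ q ∂μ) ^ (2 / q)
        ≤ ((ENNReal.ofReal c₅ *
            ENNReal.ofReal (∫ x, (W (β x) - W (α x) - ⟪gradient W (α x), β x - α x⟫) ∂μ))
              ^ (q / 2) *
          (K * (1 + (∫⁻ x, (‖α x‖₊ : ℝ≥0∞) ^ p ∂μ) + ∫⁻ x, (‖β x‖₊ : ℝ≥0∞) ^ p ∂μ))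
              ^ ((2 - q) / 2)) ^ (2 / q) :=
          ENNReal.rpow_le_rpow hGle (by positivity)
      _ = (ENNReal.ofReal c₅ *
            ENNReal.ofReal (∫ x, (W (β x) - W (α x) - ⟪gradient W (α x), β x - α x⟫) ∂μ)) *
          (K ^ e * (1 + (∫⁻ x, (‖α x‖₊ : ℝ≥0∞) ^ p ∂μ)
            + ∫⁻ x, (‖β x‖₊ : ℝ≥0∞) ^ p ∂μ) ^ e) := by
          rw [ENNReal.mul_rpow_of_nonneg _ _ (by positivity), ← ENNReal.rpow_mul,
            ← ENNReal.rpow_mul, c1, c3, ENNReal.rpow_one,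
            ENNReal.mul_rpow_of_nonneg _ _ he0]
      _ = ENNReal.ofReal (c₅ * K.toReal ^ e) *
            ENNReal.ofReal (∫ x, (W (β x) - W (α x) - ⟪gradient W (α x), β x - α x⟫) ∂μ) *
          (1 + (∫⁻ x, (‖α x‖₊ : ℝ≥0∞) ^ p ∂μ) + ∫⁻ x, (‖β x‖₊ : ℝ≥0∞) ^ p ∂μ) ^ e := by
          rw [ENNReal.ofReal_mul hc₅.le,
            ← ENNReal.ofReal_rpow_of_nonneg ENNReal.toReal_nonneg he0,
            ENNReal.ofReal_toReal hK_ne]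
          ring
end

section
/- Let p ≥ 2 and suppose a, b ∈ ℝ^n satisfy the convexity control d(a,b) := |DW(a) − DW(b)|²/(1 + |a|^{p−2} + |b|^{p−2}) ≤ c₅(W(b) − W(a) − DW(a)⋅(b−a)) together with the two-sided growth c₁|a|^p − c₂ ≤ W(a) ≤ c₃|a|^p + c₄. Then there exists C > 0 depending only on the constants and p with |DW(a)| ≤ C(1 + |a|^{p−1}) for all a ∈ ℝ^n. -/
open scoped RealInnerProductSpace
open MeasureTheory

set_option maxHeartbeats 800000

theorem stmt19 {n : ℕ} (p c₁ c₂ c₃ c₄ c₅ : ℝ) (hp : 2 ≤ p)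
    (hc₁ : 0 < c₁) (hc₂ : 0 ≤ c₂) (hc₃ : 0 < c₃) (hc₄ : 0 ≤ c₄) (hc₅ : 0 < c₅)
    (W : EuclideanSpace ℝ (Fin n) → ℝ) (hC1 : ContDiff ℝ 1 W)
    (hB3 : ∀ a b, ‖gradient W a - gradient W b‖ ^ 2 / (1 + ‖a‖ ^ (p - 2) + ‖b‖ ^ (p - 2))
      ≤ c₅ * (W b - W a - ⟪gradient W a, b - a⟫))
    (hB2 : ∀ a, c₁ * ‖a‖ ^ p - c₂ ≤ W a ∧ W a ≤ c₃ * ‖a‖ ^ p + c₄) :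
    ∃ C : ℝ, 0 < C ∧ ∀ a, ‖gradient W a‖ ≤ C * (1 + ‖a‖ ^ (p - 1)) := by
  have h2p : (0:ℝ) < (2:ℝ) ^ p := Real.rpow_pos_of_pos (by norm_num) p
  have h2p1 : (0:ℝ) < (2:ℝ) ^ (p-1) := Real.rpow_pos_of_pos (by norm_num) (p-1)
  refine ⟨c₂ + c₄ + c₃ * 2 ^ p * 2 ^ (p-1) + 1, by positivity, fun a => ?_⟩
  have hmono : ∀ b, ⟪gradient W a, b - a⟫ ≤ W b - W a := by
    intro b
    have h := hB3 a b
    have hnum : (0:ℝ) ≤ ‖gradient W a - gradient W b‖ ^ 2 /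
        (1 + ‖a‖ ^ (p-2) + ‖b‖ ^ (p-2)) := by positivity
    nlinarith [hnum, h]
  set g := gradient W a with hg
  have hsp : (0:ℝ) ≤ ‖a‖ ^ (p-1) := Real.rpow_nonneg (norm_nonneg a) _
  rcases eq_or_ne g 0 with h0 | h0
  · rw [h0, norm_zero]; positivity
  · set s := ‖a‖ with hs'
    have hs : 0 ≤ s := norm_nonneg a
    set t := 1 + s with ht
    have ht1 : (1:ℝ) ≤ t := by simp [ht]; linarith
    have ht0 : (0:ℝ) < t := by linarith
    have hgn : 0 < ‖g‖ := norm_pos_iff.2 h0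
    set b := a + (t / ‖g‖) • g with hb
    have hinner : ⟪g, b - a⟫ = t * ‖g‖ := by
      rw [hb]
      simp only [add_sub_cancel_left, real_inner_smul_right, real_inner_self_eq_norm_sq]
      field_simp
    have h1 : t * ‖g‖ ≤ W b - W a := by rw [← hinner]; exact hmono b
    have hbn : ‖b‖ ≤ 2 * t := by
      calc ‖b‖ ≤ ‖a‖ + ‖(t/‖g‖) • g‖ := norm_add_le _ _
        _ = s + t := by
            rw [norm_smul, Real.norm_eq_abs, abs_of_pos (div_pos ht0 hgn)]
            field_simp
            rfl
        _ ≤ 2*t := by linarith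
    have hWb : W b ≤ c₃ * (2*t) ^ p + c₄ := by
      have h2 := (hB2 b).2
      have hmp : ‖b‖ ^ p ≤ (2*t) ^ p :=
        Real.rpow_le_rpow (norm_nonneg b) hbn (by linarith)
      nlinarith [h2, hmp]
    have hWa : -c₂ ≤ W a := by
      have h3 := (hB2 a).1
      nlinarith [Real.rpow_nonneg hs p, h3]
    have h2t : (2*t)^p = 2^p * t^p := Real.mul_rpow (by norm_num) (le_of_lt ht0)
    have htp : t ^ p = t * t ^ (p-1) := by
      have h4 := Real.rpow_add ht0 1 (p-1)
      rw [show (1:ℝ)+(p-1) = p by ring, Real.rpow_one] at h4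
      exact h4
    -- cancel t
    have hgb : ‖g‖ ≤ c₂ + c₄ + c₃ * 2^p * t^(p-1) := by
      have hWb2 : W b ≤ c₃ * 2^p * t^p + c₄ := by
        rw [mul_assoc, ← h2t]; exact hWb
      have htg : t * ‖g‖ ≤ t * (c₂ + c₄ + c₃ * 2^p * t^(p-1)) := by
        have h5 : t * ‖g‖ ≤ c₂ + c₄ + c₃ * 2^p * (t * t^(p-1)) := by
          rw [← htp]; linarith [h1, hWb2, hWa]
        have htpn : (0:ℝ) ≤ t^(p-1) := le_of_lt (Real.rpow_pos_of_pos ht0 _)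
        nlinarith [h5]
      exact le_of_mul_le_mul_left htg ht0
    have hkey : t^(p-1) ≤ 2^(p-1) * (1 + s^(p-1)) := by
      have hm : t ≤ 2 * max 1 s := by
        rcases le_total s 1 with h | h
        · rw [max_eq_left h]; simp [ht]; linarith
        · rw [max_eq_right h]; simp [ht]; linarith
      have hmx : (0:ℝ) ≤ max 1 s := le_trans zero_le_one (le_max_left _ _)
      have step1 : t^(p-1) ≤ (2 * max 1 s)^(p-1) :=
        Real.rpow_le_rpow (le_of_lt ht0) hm (by linarith)
      have step2 : (2 * max 1 s)^(p-1) = 2^(p-1) * (max 1 s)^(p-1) :=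
        Real.mul_rpow (by norm_num) hmx
      have step3 : (max 1 s)^(p-1) ≤ 1 + s^(p-1) := by
        rcases le_total s 1 with h | h
        · rw [max_eq_left h, Real.one_rpow]
          have : (0:ℝ) ≤ s^(p-1) := Real.rpow_nonneg hs _
          linarith
        · rw [max_eq_right h]; rw [hs']; linarith [hsp]
      have step4 : 2^(p-1) * (max 1 s)^(p-1) ≤ 2^(p-1) * (1 + s^(p-1)) :=
        mul_le_mul_of_nonneg_left step3 (le_of_lt h2p1)
      rw [step2] at step1
      exact step1.trans step4
    have hsps : (0:ℝ) ≤ s^(p-1) := Real.rpow_nonneg hs _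
    have hck : c₃ * 2^p * t^(p-1) ≤ c₃ * 2^p * (2^(p-1) * (1 + s^(p-1))) :=
      mul_le_mul_of_nonneg_left hkey (by positivity)
    nlinarith [hgb, hck, hsps, mul_nonneg hc₂ hsps, mul_nonneg hc₄ hsps,
      mul_nonneg (mul_nonneg (mul_nonneg hc₃.le h2p.le) h2p1.le) hsps]
end
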